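/- (Rose) For a finite group N the following are equivalent: (1) the center Z(N) is trivial and the inner automorphism group Inn(N) has a complement in the automorphism group Aut(N); (2) whenever N is (embedded as) a normal subgroup of a finite group G, the image of N has a complement in G. -/

import Mathlib

open Pointwise

/-- `K` is a complement of `N` inside the subgroup `H` of `G`:
`K ≤ H`, `K ∩ N = 1` and `KN = H` (as sets). -/
def IsComplementOfIn {G : Type*} [Group G] (K N H : Subgroup G) : Prop :=
  K ≤ H ∧ K ⊓ N = ⊥ ∧ (K : Set G) * (N : Set G) = (H : Set G)

/-- `N` has a complement in the subgroup `H` of `G`. -/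
def HasComplementIn {G : Type*} [Group G] (N H : Subgroup G) : Prop :=
  ∃ K : Subgroup G, IsComplementOfIn K N H

universe u

/-- Gaschütz' theorem holds for the finite group `N`: whenever `N` is embedded as a
normal subgroup of a finite group `G`, `H` is a subgroup with `N ≤ H ≤ G`,
`gcd(|N|, [G : H]) = 1` and `N` has a complement in `H`, then `N` has a complement
in `G`. -/
def GaschuetzHolds (N : Type u) [Group N] : Prop :=
  ∀ (G : Type u) [Group G] [Finite G] (f : N →* G) (H : Subgroup G),
    Function.Injective f → f.range.Normal → f.range ≤ H →
    Nat.Coprime (Nat.card N) H.index →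
    HasComplementIn f.range H → HasComplementIn f.range ⊤

lemma ord_aux {N : Type*} [Group N] [Finite N] (p : ℕ) (hp : p.Prime) (x : N) :
    ¬ p ∣ orderOf (x ^ p ^ Nat.card N) := by
  set m := Nat.card N with hmdef
  have hm : 0 < m := Nat.card_pos
  have hx : x ^ m = 1 := pow_card_eq_one'
  set s := m.factorization p with hsdef
  have hs : s < m := Nat.factorization_lt p hm.ne'
  have hmul : p ^ s * (m / p ^ s) = m := Nat.ordProj_mul_ordCompl_eq_self m p
  have key : (x ^ p ^ m) ^ (m / p ^ s) = 1 := by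
    have h1 : p ^ m = p ^ s * p ^ (m - s) := by rw [← pow_add]; congr 1; omega
    have h2 : p ^ m * (m / p ^ s) = m * p ^ (m - s) := by
      calc p ^ m * (m / p ^ s) = p ^ s * (m / p ^ s) * p ^ (m - s) := by rw [h1]; ring
      _ = m * p ^ (m - s) := by rw [hmul]
    rw [← pow_mul, h2, pow_mul, hx, one_pow]
  have hdvd : orderOf (x ^ p ^ m) ∣ m / p ^ s := orderOf_dvd_of_pow_eq_one key
  intro hcon
  exact Nat.not_dvd_ordCompl hp hm.ne' (hcon.trans hdvd)

lemma no_complement {N : Type u} [Group N] [Finite N] (h : Subgroup.center N ≠ ⊥) :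
    ∃ (G : Type u) (_ : Group G) (_ : Finite G) (f : N →* G),
      Function.Injective f ∧ f.range.Normal ∧ ¬ HasComplementIn f.range ⊤ := by
  obtain ⟨z₀, hz₀mem, hz₀⟩ : ∃ z₀ ∈ Subgroup.center N, z₀ ≠ 1 := by
    by_contra hcon
    push_neg at hcon
    exact h ((Subgroup.eq_bot_iff_forall _).mpr hcon)
  have hord : orderOf z₀ ≠ 1 := fun hc => hz₀ (orderOf_eq_one_iff.mp hc)
  set p := (orderOf z₀).minFac with hpdef
  have hp : p.Prime := Nat.minFac_prime hord
  have hpd : p ∣ orderOf z₀ := Nat.minFac_dvd _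
  set z := z₀ ^ (orderOf z₀ / p) with hzdef
  have hzc : z ∈ Subgroup.center N := Subgroup.pow_mem _ hz₀mem _
  have hordz : orderOf z = p := orderOf_pow_orderOf_div (orderOf_pos z₀).ne' hpd
  set m := Nat.card N with hmdef
  have hm : 0 < m := Nat.card_pos
  set nn := p ^ (m + 1) with hnndef
  haveI : NeZero nn := ⟨pow_ne_zero _ hp.pos.ne'⟩
  set C := Multiplicative (ZMod nn) with hCdef
  set c : C := Multiplicative.ofAdd (1 : ZMod nn) with hcdef
  have hcn : ∀ t : ℕ, c ^ t = Multiplicative.ofAdd ((t : ZMod nn)) := by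
    intro t; rw [hcdef, ← ofAdd_nsmul, nsmul_eq_mul, mul_one]
  have hcz : ∀ t : ℤ, c ^ t = Multiplicative.ofAdd ((t : ZMod nn)) := by
    intro t; rw [hcdef, ← ofAdd_zsmul, zsmul_eq_mul, mul_one]
  have hc1 : ∀ t : ℤ, c ^ t = 1 ↔ (nn : ℤ) ∣ t := by
    intro t
    rw [hcz, ← ZMod.intCast_zmod_eq_zero_iff_dvd]
    constructor
    · intro hh; exact Multiplicative.ofAdd.injective (hh.trans ofAdd_zero.symm)
    · intro hh; rw [hh]; rfl
  set D : Subgroup (N × C) := Subgroup.zpowers (z⁻¹, c ^ (p ^ m)) with hDdef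
  have hgen : (z⁻¹, c ^ (p ^ m)) ∈ Subgroup.center (N × C) := by
    rw [Subgroup.mem_center_iff]
    intro g
    have := Subgroup.mem_center_iff.mp (inv_mem hzc) g.1
    ext
    · simpa using this
    · show Multiplicative.toAdd (g.2 * c ^ p ^ m) = Multiplicative.toAdd (c ^ p ^ m * g.2)
      rw [mul_comm]
  haveI hDn : D.Normal := by
    constructor
    intro d hd g
    have hdc : d ∈ Subgroup.center (N × C) := (Subgroup.zpowers_le.mpr hgen) hd
    rw [Subgroup.mem_center_iff.mp hdc g, mul_assoc, mul_inv_cancel, mul_one]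
    exact hd
  haveI : Finite ((N × C) ⧸ D) := Quotient.finite _
  set f : N →* (N × C) ⧸ D := (QuotientGroup.mk' D).comp (MonoidHom.inl N C) with hfdef
  have hDmem : ∀ x : N × C, x ∈ D ↔ ∃ k : ℤ, x = (z ^ (-k), (c ^ (p ^ m)) ^ k) := by
    intro x
    rw [hDdef, Subgroup.mem_zpowers_iff]
    refine exists_congr fun k => ?_
    have : (z⁻¹, c ^ (p ^ m)) ^ k = (z ^ (-k), (c ^ (p ^ m)) ^ k) := by
      show ((z⁻¹) ^ k, (c ^ (p ^ m)) ^ k) = _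
      rw [inv_zpow, zpow_neg]
    rw [this, eq_comm]
  -- injectivity
  have hfinj : Function.Injective f := by
    rw [← MonoidHom.ker_eq_bot_iff, Subgroup.eq_bot_iff_forall]
    intro n hn
    rw [MonoidHom.mem_ker, hfdef, MonoidHom.comp_apply] at hn
    have : ((n, 1) : N × C) ∈ D := (QuotientGroup.eq_one_iff _).mp hn
    rw [hDmem] at this
    obtain ⟨k, hk⟩ := this
    have h1 : n = z ^ (-k) := congrArg Prod.fst hk
    have h2 : (1 : C) = (c ^ (p ^ m)) ^ k := congrArg Prod.snd hk
    have h3 : (nn : ℤ) ∣ ((p ^ m : ℕ) : ℤ) * k := by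
      rw [← hc1]
      rw [← zpow_natCast, ← zpow_mul] at h2
      exact h2.symm
    have h4 : (p : ℤ) ∣ k := by
      have hcast : (nn : ℤ) = ((p ^ m : ℕ) : ℤ) * p := by
        rw [hnndef]; push_cast; ring
      rw [hcast] at h3
      have hpm : ((p ^ m : ℕ) : ℤ) ≠ 0 := Int.natCast_ne_zero.mpr (pow_ne_zero _ hp.pos.ne')
      exact (mul_dvd_mul_iff_left hpm).mp h3
    have : z ^ (-k) = 1 := by
      rw [← orderOf_dvd_iff_zpow_eq_one, hordz]
      exact dvd_neg.mpr h4
    rw [h1, this]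
  -- normality of range
  have hfrange : f.range.Normal := by
    constructor
    intro x hx g
    obtain ⟨n, rfl⟩ := hx
    obtain ⟨⟨a, b⟩, rfl⟩ := QuotientGroup.mk'_surjective D g
    refine ⟨a * n * a⁻¹, ?_⟩
    rw [hfdef, MonoidHom.comp_apply, MonoidHom.comp_apply]
    rw [← map_inv, ← map_mul, ← map_mul]
    congr 1
    ext
    · rfl
    · show (1 : C) = b * 1 * b⁻¹
      rw [mul_one, mul_inv_cancel]
  -- the projection map
  haveI : NeZero (p ^ m) := ⟨pow_ne_zero _ hp.pos.ne'⟩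
  have hdvd : p ^ m ∣ nn := by rw [hnndef]; exact pow_dvd_pow p (Nat.le_succ m)
  set χ : C →* Multiplicative (ZMod (p ^ m)) :=
    AddMonoidHom.toMultiplicative (ZMod.castHom hdvd (ZMod (p ^ m))).toAddMonoidHom with hχdef
  have hχ : ∀ a : ZMod nn, χ (Multiplicative.ofAdd a) =
      Multiplicative.ofAdd (ZMod.castHom hdvd (ZMod (p ^ m)) a) := fun a => rfl
  set ψ : N × C →* Multiplicative (ZMod (p ^ m)) := χ.comp (MonoidHom.snd N C) with hψdef
  have hψD : D ≤ ψ.ker := by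
    rw [hDdef, Subgroup.zpowers_le]
    rw [MonoidHom.mem_ker]
    show χ (c ^ (p ^ m)) = 1
    rw [hcn, hχ, map_natCast, ZMod.natCast_self]
    rfl
  set π : ((N × C) ⧸ D) →* Multiplicative (ZMod (p ^ m)) :=
    QuotientGroup.lift D ψ hψD with hπdef
  have hπmk : ∀ x : N × C, π (QuotientGroup.mk' D x) = ψ x := fun x => rfl
  have hπf : ∀ n : N, π (f n) = 1 := by
    intro n
    rw [hfdef, MonoidHom.comp_apply, hπmk]
    show χ 1 = 1
    exact map_one χ
  have hπc : π (QuotientGroup.mk' D (1, c)) = Multiplicative.ofAdd (1 : ZMod (p ^ m)) := by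
    rw [hπmk]
    show χ c = _
    rw [hcdef, hχ, map_one]
  have hkerπ : ∀ g, π g = 1 → g ∈ f.range := by
    intro g hg
    obtain ⟨⟨n, b⟩, rfl⟩ := QuotientGroup.mk'_surjective D g
    rw [hπmk] at hg
    replace hg : χ b = 1 := hg
    set β := Multiplicative.toAdd b with hβdef
    have hb : b = Multiplicative.ofAdd β := rfl
    have hcast : ((β.val : ℕ) : ZMod (p ^ m)) = 0 := by
      have hβv : ((β.val : ℕ) : ZMod nn) = β := ZMod.natCast_rightInverse β
      have := hg
      rw [hb, ← hβv, hχ, map_natCast] at this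
      exact Multiplicative.ofAdd.injective (by simpa using this)
    obtain ⟨t, ht⟩ := (ZMod.natCast_eq_zero_iff _ _).mp hcast
    have hbc : b = (c ^ (p ^ m)) ^ t := by
      rw [hb, ← ZMod.natCast_rightInverse β, ht, ← pow_mul, hcn]
    refine ⟨n * z ^ t, ?_⟩
    have hD : ((z⁻¹, c ^ (p ^ m)) : N × C) ^ t ∈ D := by
      rw [hDdef]
      exact pow_mem (Subgroup.mem_zpowers _) t
    have hsplit : ((n, b) : N × C) = ((n * z ^ t, 1) : N × C) * ((z⁻¹, c ^ (p ^ m)) : N × C) ^ t := by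
      have : ((z⁻¹, c ^ (p ^ m)) : N × C) ^ t = ((z⁻¹) ^ t, (c ^ (p ^ m)) ^ t) := rfl
      rw [this]
      ext
      · show n = n * z ^ t * (z⁻¹) ^ t
        rw [inv_pow, mul_assoc, mul_inv_cancel, mul_one]
      · show b = 1 * (c ^ (p ^ m)) ^ t
        rw [one_mul, hbc]
    show f (n * z ^ t) = QuotientGroup.mk' D (n, b)
    have h1 : QuotientGroup.mk' D (((z⁻¹, c ^ (p ^ m)) : N × C) ^ t) = 1 :=
      (QuotientGroup.eq_one_iff _).mpr hD
    have h2 : QuotientGroup.mk' D (n, b) = QuotientGroup.mk' D (n * z ^ t, 1) := by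
      rw [hsplit, map_mul, h1, mul_one]
    rw [h2]
    rfl
  -- no complement
  have hnc : ¬ ∃ K : Subgroup ((N × C) ⧸ D), K ≤ ⊤ ∧ K ⊓ f.range = ⊥ ∧
      (K : Set ((N × C) ⧸ D)) * (f.range : Set ((N × C) ⧸ D)) = ((⊤ : Subgroup ((N × C) ⧸ D)) : Set ((N × C) ⧸ D)) := by
    rintro ⟨K, -, hKinf, hKmul⟩
    have hmemc : QuotientGroup.mk' D (1, c) ∈ (K : Set ((N × C) ⧸ D)) * (f.range : Set ((N × C) ⧸ D)) := by
      rw [hKmul, Subgroup.coe_top]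
      exact Set.mem_univ _
    rw [Set.mem_mul] at hmemc
    obtain ⟨k₀, hk₀, w, hw, hmul⟩ := hmemc
    obtain ⟨n₀, rfl⟩ := hw
    have hπk₀ : π k₀ = Multiplicative.ofAdd (1 : ZMod (p ^ m)) := by
      have h3 := congrArg π hmul
      rw [map_mul, hπf n₀, mul_one, hπc] at h3
      exact h3
    have hk₀p : k₀ ^ (p ^ m) = 1 := by
      have h4 : k₀ ^ (p ^ m) ∈ K := pow_mem hk₀ _
      have h5 : π (k₀ ^ (p ^ m)) = 1 := by
        rw [map_pow, hπk₀, ← ofAdd_nsmul, nsmul_eq_mul, mul_one, ZMod.natCast_self]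
        rfl
      have h6 : k₀ ^ (p ^ m) ∈ K ⊓ f.range := ⟨h4, hkerπ _ h5⟩
      rw [hKinf] at h6
      exact Subgroup.mem_bot.mp h6
    obtain ⟨⟨n₁, b₁⟩, hrep⟩ := QuotientGroup.mk'_surjective D k₀
    have h7 : ((n₁, b₁) : N × C) ^ (p ^ m) ∈ D := by
      have : QuotientGroup.mk' D (((n₁, b₁) : N × C) ^ (p ^ m)) = 1 := by
        rw [map_pow, hrep, hk₀p]
      exact (QuotientGroup.eq_one_iff _).mp this
    rw [hDmem] at h7
    obtain ⟨k, hk⟩ := h7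
    have h8 : n₁ ^ (p ^ m) = z ^ (-k) := congrArg Prod.fst hk
    have h9 : b₁ ^ (p ^ m) = (c ^ (p ^ m)) ^ k := congrArg Prod.snd hk
    set β₁ := Multiplicative.toAdd b₁ with hβ₁def
    have hb₁ : b₁ = c ^ ((β₁.val : ℤ)) := by
      rw [hcz]
      show b₁ = Multiplicative.ofAdd (((β₁.val : ℤ) : ZMod nn))
      push_cast
      rw [ZMod.natCast_rightInverse β₁]
      rfl
    have h10 : ((β₁.val : ℤ) : ZMod (p ^ m)) = 1 := by
      rw [← hrep, hπmk] at hπk₀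
      replace hπk₀ : χ b₁ = Multiplicative.ofAdd (1 : ZMod (p ^ m)) := hπk₀
      have hβv : ((β₁.val : ℕ) : ZMod nn) = β₁ := ZMod.natCast_rightInverse β₁
      have hb' : b₁ = Multiplicative.ofAdd β₁ := rfl
      rw [hb', ← hβv, hχ, map_natCast] at hπk₀
      have := Multiplicative.ofAdd.injective hπk₀
      push_cast
      exact this
    obtain ⟨s, hs⟩ : ((p ^ m : ℕ) : ℤ) ∣ ((β₁.val : ℤ) - 1) := by
      rw [← ZMod.intCast_zmod_eq_zero_iff_dvd]
      push_cast at h10 ⊢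
      rw [sub_eq_zero]
      exact h10
    have h11 : (nn : ℤ) ∣ ((β₁.val : ℤ) * (p ^ m : ℕ) - (p ^ m : ℕ) * k) := by
      rw [← hc1]
      have e1 : b₁ ^ (p ^ m) = c ^ ((β₁.val : ℤ) * ((p ^ m : ℕ) : ℤ)) := by
        rw [hb₁, ← zpow_natCast (c ^ ((β₁.val : ℤ))), ← zpow_mul]
      have e2 : (c ^ (p ^ m)) ^ k = c ^ (((p ^ m : ℕ) : ℤ) * k) := by
        rw [← zpow_natCast c, ← zpow_mul]
      rw [zpow_sub, ← e1, ← e2, h9]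
      exact mul_inv_cancel _
    have hpk : ¬ (p : ℤ) ∣ k := by
      intro hcon
      have hppm : (p : ℤ) ∣ ((p ^ m : ℕ) : ℤ) := by
        push_cast
        exact dvd_pow_self (p : ℤ) hm.ne'
      have hpak : (p : ℤ) ∣ ((β₁.val : ℤ) - k) := by
        have hcast : (nn : ℤ) = ((p ^ m : ℕ) : ℤ) * p := by
          rw [hnndef]; push_cast; ring
        rw [hcast] at h11
        have hfact : ((β₁.val : ℤ) * (p ^ m : ℕ) - (p ^ m : ℕ) * k)
            = ((p ^ m : ℕ) : ℤ) * ((β₁.val : ℤ) - k) := by ring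
        rw [hfact] at h11
        have hpm : ((p ^ m : ℕ) : ℤ) ≠ 0 := Int.natCast_ne_zero.mpr (pow_ne_zero _ hp.pos.ne')
        have := (mul_dvd_mul_iff_left hpm).mp h11
        exact this
      have hpa : (p : ℤ) ∣ (β₁.val : ℤ) := by
        have : (β₁.val : ℤ) = ((β₁.val : ℤ) - k) + k := by ring
        rw [this]
        exact dvd_add hpak hcon
      have hone : (p : ℤ) ∣ 1 := by
        have e3 : (1 : ℤ) = (β₁.val : ℤ) - (p ^ m : ℕ) * s := by linarith
        rw [e3]
        exact dvd_sub hpa (hppm.mul_right s)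
      have := Int.le_of_dvd one_pos hone
      have hlt : (1 : ℤ) < p := by exact_mod_cast hp.one_lt
      omega
    have hordy : ¬ p ∣ orderOf (n₁ ^ p ^ m) := by
      rw [hmdef]
      exact ord_aux p hp n₁
    have hyp : (n₁ ^ p ^ m) ^ p = 1 := by
      rw [h8, ← zpow_natCast, ← zpow_mul, ← orderOf_dvd_iff_zpow_eq_one, hordz]
      exact Dvd.dvd.mul_left dvd_rfl (-k)
    have hdy : orderOf (n₁ ^ p ^ m) ∣ p := orderOf_dvd_of_pow_eq_one hyp
    rcases (Nat.Prime.eq_one_or_self_of_dvd hp _ hdy) with hcase | hcase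
    · have hy1 : n₁ ^ p ^ m = 1 := orderOf_eq_one_iff.mp hcase
      have : (orderOf z : ℤ) ∣ (-k) := orderOf_dvd_iff_zpow_eq_one.mpr (h8 ▸ hy1)
      rw [hordz] at this
      exact hpk (dvd_neg.mp this)
    · exact hordy (by rw [hcase])
  refine ⟨(N × C) ⧸ D, inferInstance, inferInstance, f, hfinj, hfrange, ?_⟩
  intro hcomp
  obtain ⟨K, h1, h2, h3⟩ := hcomp
  exact hnc ⟨K, h1, h2, h3⟩

lemma dir12 {N : Type u} [Group N] [Finite N]
    (hcenter : Subgroup.center N = ⊥)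
    (hA : HasComplementIn (MulAut.conj : N →* MulAut N).range ⊤)
    (G : Type u) [Group G] [Finite G] (f : N →* G)
    (hinj : Function.Injective f) (hnormal : f.range.Normal) :
    HasComplementIn f.range ⊤ := by
  obtain ⟨A, -, hAinf, hAmul⟩ := hA
  haveI := hnormal
  set e : N ≃* f.range := MonoidHom.ofInjective hinj with hedef
  set φ : G →* MulAut N :=
    (MulAut.congr e.symm).toMonoidHom.comp MulAut.conjNormal with hφdef
  have hφf : ∀ n : N, φ (f n) = MulAut.conj n := by
    intro n
    ext x
    show e.symm ((MulAut.conjNormal (f n)) (e x)) = n * x * n⁻¹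
    rw [MulEquiv.symm_apply_eq]
    apply Subtype.ext
    show (f n) * (e x : G) * (f n)⁻¹ = (e (n * x * n⁻¹) : G)
    rw [hedef, MonoidHom.ofInjective_apply, MonoidHom.ofInjective_apply]
    rw [map_mul, map_mul, map_inv]
  refine ⟨A.comap φ, le_top, ?_, ?_⟩
  · rw [Subgroup.eq_bot_iff_forall]
    intro x hx
    obtain ⟨hxK, hxR⟩ := Subgroup.mem_inf.mp hx
    obtain ⟨n, rfl⟩ := hxR
    have hconjA : MulAut.conj n ∈ A := by
      rw [← hφf n]
      exact Subgroup.mem_comap.mp hxK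
    have h1 : MulAut.conj n ∈ A ⊓ (MulAut.conj : N →* MulAut N).range :=
      ⟨hconjA, ⟨n, rfl⟩⟩
    rw [hAinf] at h1
    have h2 : MulAut.conj n = 1 := Subgroup.mem_bot.mp h1
    have h3 : n ∈ Subgroup.center N := by
      rw [Subgroup.mem_center_iff]
      intro g
      have h5 : n * g * n⁻¹ = g := by
        have := congrArg (fun (ψ : MulAut N) => ψ g) h2
        simpa using this
      have h6 : n * g = (n * g * n⁻¹) * n := by group
      rw [h5] at h6
      exact h6.symm
    rw [hcenter] at h3
    rw [Subgroup.mem_bot.mp h3, map_one]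
  · ext g
    simp only [Subgroup.coe_top, Set.mem_univ, iff_true]
    have hg : φ g ∈ (A : Set (MulAut N)) *
        ((MulAut.conj : N →* MulAut N).range : Set (MulAut N)) := by
      rw [hAmul, Subgroup.coe_top]
      exact Set.mem_univ _
    rw [Set.mem_mul] at hg
    obtain ⟨a, ha, b, hb, hab⟩ := hg
    obtain ⟨n, rfl⟩ := hb
    rw [Set.mem_mul]
    refine ⟨g * (f n)⁻¹, ?_, f n, ⟨n, rfl⟩, by group⟩
    rw [SetLike.mem_coe, Subgroup.mem_comap, map_mul, map_inv, hφf, ← hab,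
      mul_inv_cancel_right]
    exact ha

/-- **Rose's theorem.** For a finite group `N`, the center of `N` is trivial and
`Inn(N)` has a complement in `Aut(N)` if and only if whenever `N` is embedded as a
normal subgroup of a finite group `G`, the image of `N` has a complement in `G`. -/
theorem rose (N : Type u) [Group N] [Finite N] :
    (Subgroup.center N = ⊥ ∧
      HasComplementIn (MulAut.conj : N →* MulAut N).range ⊤) ↔
    (∀ (G : Type u) [Group G] [Finite G] (f : N →* G),
      Function.Injective f → f.range.Normal → HasComplementIn f.range ⊤) := by
  constructor
  · rintro ⟨hcenter, hA⟩ G _ _ f hinj hnormal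
    exact dir12 hcenter hA G f hinj hnormal
  · intro H
    have hcenter : Subgroup.center N = ⊥ := by
      by_contra hc
      obtain ⟨G, _, _, f, hinj, hnorm, hnc⟩ := no_complement hc
      exact hnc (H G f hinj hnorm)
    refine ⟨hcenter, ?_⟩
    have hinj : Function.Injective (MulAut.conj : N →* MulAut N) := by
      rw [← MonoidHom.ker_eq_bot_iff, Subgroup.eq_bot_iff_forall]
      intro n hn
      have h2 : MulAut.conj n = 1 := hn
      have h3 : n ∈ Subgroup.center N := by
        rw [Subgroup.mem_center_iff]
        intro g
        have h5 : n * g * n⁻¹ = g := by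
          have := congrArg (fun (ψ : MulAut N) => ψ g) h2
          simpa using this
        have h6 : n * g = (n * g * n⁻¹) * n := by group
        rw [h5] at h6
        exact h6.symm
      rw [hcenter] at h3
      exact Subgroup.mem_bot.mp h3
    have hnormal : (MulAut.conj : N →* MulAut N).range.Normal := by
      constructor
      rintro x ⟨n, rfl⟩ ψ
      refine ⟨ψ n, ?_⟩
      ext g
      show ψ n * g * (ψ n)⁻¹ = ψ (MulAut.conj n (ψ⁻¹ g))
      show ψ n * g * (ψ n)⁻¹ = ψ (n * (ψ⁻¹ g) * n⁻¹)
      rw [map_mul, map_mul, map_inv]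
      congr 1
      rw [MulAut.apply_inv_self]
    exact H (MulAut N) MulAut.conj hinj hnormal
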